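/- For every N ≥ 2, Σ_{n=2}^{N} W((s^{(2)}_n − 1)/2) = (s^{(2)}_N − 1)/2. -/

import Mathlib

/-- Moser function `m_r(n)`: reinterpret the base-`r` digits of `n` as base-`r²` digits,
i.e. `m_r(n) = Σ_i ν_i r^(2i)` where `n = Σ_i ν_i r^i` is the base-`r` expansion. -/
def moser (r n : ℕ) : ℕ := Nat.ofDigits (r ^ 2) (Nat.digits r n)

/-- `s^(r)_n = r · m_r(n−1) + 1` for `n ≥ 1`. -/
def moserS (r n : ℕ) : ℕ := r * moser r (n - 1) + 1

/-- The `i`-th base-`r` digit of `n` (0 if beyond the expansion). -/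
def dig (r n i : ℕ) : ℕ := (Nat.digits r n).getD i 0

/-- Josephus–Groër survivor function: with `M = N` if `N` is odd, `M = N − 1` otherwise,
and `M = Σ_j b_j 2^j` the binary expansion, `W(N) = 1 + Σ_{j odd} b_j 2^j`. -/
def W (N : ℕ) : ℕ :=
  let M := if N % 2 = 1 then N else N - 1
  1 + ((((Nat.digits 2 M).zipIdx.map Prod.swap).filter (fun p => p.1 % 2 = 1)).map (fun p => p.2 * 2 ^ p.1)).sum

/-- Sum of digits at odd positions, starting enumeration at `k`. -/
def listS (k : ℕ) (l : List ℕ) : ℕ :=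
  ((((l.zipIdx k).map Prod.swap).filter (fun p => p.1 % 2 = 1)).map (fun p => p.2 * 2 ^ p.1)).sum

def S (n : ℕ) : ℕ := listS 0 (Nat.digits 2 n)

lemma W_eq (N : ℕ) : W N = 1 + S (if N % 2 = 1 then N else N - 1) := rfl

lemma listS_nil (k : ℕ) : listS k [] = 0 := rfl

lemma listS_cons (k a : ℕ) (l : List ℕ) :
    listS k (a :: l) = (if k % 2 = 1 then a * 2 ^ k else 0) + listS (k+1) l := by
  simp only [listS, List.zipIdx_cons, List.map_cons, Prod.swap, List.filter_cons]
  split <;> simp_all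

lemma listS_shift (l : List ℕ) (k : ℕ) : listS (k+2) l = 4 * listS k l := by
  induction l generalizing k with
  | nil => simp [listS_nil]
  | cons a l ih =>
    rw [listS_cons, listS_cons, show k+2+1 = k+1+2 from rfl, ih, Nat.mul_add]
    have h2 : (k+2) % 2 = k % 2 := by omega
    rw [h2, pow_succ, pow_succ]
    split <;> ring

lemma S_rec (n : ℕ) : S n = 2 * (n / 2 % 2) + 4 * S (n / 4) := by
  rcases Nat.lt_or_ge n 2 with h | h
  · interval_cases n <;> simp [S, listS]
  · have h1 : 0 < n := by omega
    have h2 : 0 < n / 2 := by omega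
    rw [S, Nat.digits_def' (by norm_num) h1, Nat.digits_def' (by norm_num : (1:ℕ) < 2) h2,
      listS_cons, listS_cons, listS_shift]
    have : n / 2 / 2 = n / 4 := by omega
    rw [this]
    simp [S, mul_comm]

lemma moser_rec (n : ℕ) : moser 2 n = n % 2 + 4 * moser 2 (n / 2) := by
  rcases Nat.eq_zero_or_pos n with h | h
  · simp [h, moser]
  · rw [moser, Nat.digits_def' (by norm_num : (1:ℕ) < 2) h, Nat.ofDigits_cons]
    simp [moser]

lemma moser_pos (n : ℕ) (hn : 1 ≤ n) : 1 ≤ moser 2 n := by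
  induction n using Nat.strong_induction_on with
  | _ n ih =>
    rw [moser_rec]
    rcases Nat.eq_zero_or_pos (n % 2) with h | h
    · have : 1 ≤ n / 2 := by omega
      have := ih (n / 2) (by omega) this
      omega
    · omega

lemma S_moser (n : ℕ) : S (moser 2 n) = 0 := by
  induction n using Nat.strong_induction_on with
  | _ n ih =>
    rcases Nat.eq_zero_or_pos n with h | h
    · simp [h, moser, S, listS]
    · rw [S_rec, moser_rec]
      have e1 : (n % 2 + 4 * moser 2 (n / 2)) / 2 % 2 = 0 := by omega
      have e2 : (n % 2 + 4 * moser 2 (n / 2)) / 4 = moser 2 (n / 2) := by omega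
      rw [e1, e2, ih (n / 2) (by omega)]

lemma S_odd (x : ℕ) (hx : x % 2 = 1) : S x = S (x - 1) := by
  rw [S_rec, S_rec (x - 1)]
  have h1 : x / 2 = (x - 1) / 2 := by omega
  have h2 : x / 4 = (x - 1) / 4 := by omega
  rw [h1, h2]

lemma key (k : ℕ) (hk : 1 ≤ k) : moser 2 (k - 1) + W (moser 2 k) = moser 2 k := by
  induction k using Nat.strong_induction_on with
  | _ k ih =>
    have hpar : moser 2 k % 2 = k % 2 := by
      rw [moser_rec]; omega
    rcases Nat.even_or_odd k with ⟨m, hm⟩ | ⟨m, hm⟩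
    · -- k = 2m even, m ≥ 1
      have hm1 : 1 ≤ m := by omega
      have hk2 : k / 2 = m := by omega
      have hfk : moser 2 k = 4 * moser 2 m := by rw [moser_rec, hk2]; omega
      have hfm1 : 1 ≤ moser 2 m := moser_pos m hm1
      have hM : moser 2 k % 2 = 0 := by omega
      rw [W_eq, if_neg (by omega)]
      -- S (4 * moser 2 m - 1) = 2 + 4 * S (moser 2 m - 1)
      have hS4 : S (moser 2 k - 1) = 2 + 4 * S (moser 2 m - 1) := by
        rw [S_rec]
        have e1 : (moser 2 k - 1) / 2 % 2 = 1 := by omega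
        have e2 : (moser 2 k - 1) / 4 = moser 2 m - 1 := by omega
        rw [e1, e2]
      -- IH at m gives: moser 2 (m-1) + W (moser 2 m) = moser 2 m
      have hIH := ih m (by omega) hm1
      have hWm : W (moser 2 m) = 1 + S (moser 2 m - 1) := by
        rw [W_eq]
        split
        · rw [← S_odd (moser 2 m) (by assumption)]
        · rfl
      rw [hWm] at hIH
      -- moser 2 (k-1) = 4 * moser 2 (m-1) + 1
      have hk1 : moser 2 (k - 1) = 4 * moser 2 (m - 1) + 1 := by
        rw [moser_rec]
        have : (k - 1) / 2 = m - 1 := by omega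
        rw [this]; omega
      rw [hS4, hk1, hfk]
      omega
    · -- k = 2m+1 odd
      have hM : moser 2 k % 2 = 1 := by omega
      rw [W_eq, if_pos hM, S_moser]
      have hk2 : k / 2 = m := by omega
      have hfk : moser 2 k = 4 * moser 2 m + 1 := by rw [moser_rec, hk2]; omega
      have hk1 : moser 2 (k - 1) = 4 * moser 2 m := by
        rw [moser_rec]
        have : (k - 1) / 2 = m := by omega
        rw [this]; omega
      omega

lemma moserS_div (n : ℕ) : (moserS 2 n - 1) / 2 = moser 2 (n - 1) := by
  simp [moserS]

/-- For every `N ≥ 2`, `Σ_{n=2}^{N} W((s^(2)_n − 1)/2) = (s^(2)_N − 1)/2`. -/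
theorem sum_W_moserS (N : ℕ) (hN : 2 ≤ N) :
    ∑ n ∈ Finset.Icc 2 N, W ((moserS 2 n - 1) / 2) = (moserS 2 N - 1) / 2 := by
  simp only [moserS_div]
  induction N, hN using Nat.le_induction with
  | base =>
    rw [Finset.Icc_self, Finset.sum_singleton]
    have := key 1 le_rfl
    simpa [moser] using this
  | succ N h ih =>
    rw [Finset.sum_Icc_succ_top (by omega), ih]
    have := key N (by omega)
    simpa using this
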